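/- Let F be a finite field of odd cardinality q and let n ≥ 2 be an even integer. Consider the projective space PG(n, F) whose points are the elements of the projectivization ℙ(F, F^{n+1}) (one-dimensional subspaces of F^{n+1}) and whose lines are the point sets of two-dimensional subspaces of F^{n+1}. Then for any two distinct points A and B there exists a finite set S of lines such that the sum over ZMod 2 of the indicator functions of the lines in S equals the indicator function of {A, B}; consequently every configuration on PG(n, F) with at least 2 lit bulbs is reducible, and every configuration with an even number of lit bulbs can be reduced to 0 lit bulbs. (Section 6: the results extend to projective spaces of even dimension) -/

import Mathlib

open scoped Classical LinearAlgebra.Projectivization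

/-- A line of the projective space `PG(n, F)`: the set of points (one-dimensional
subspaces) contained in a fixed two-dimensional subspace `W` of `F^{n+1}`. -/
def projLine {F : Type*} [Field F] {n : ℕ} (W : Submodule F (Fin (n + 1) → F)) :
    Set (ℙ F (Fin (n + 1) → F)) :=
  {p : ℙ F (Fin (n + 1) → F) | p.submodule ≤ W}

open Module Submodule Finset

section Helpers

/-- A finset closed under a fixed-point-free involution has even cardinality. -/
private lemma aux_even_finset {α : Type*} (f : α → α)
    (h2 : ∀ a, f (f a) = a) (hf : ∀ a, f a ≠ a) :
    ∀ s : Finset α, (∀ a ∈ s, f a ∈ s) → Even s.card := by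
  intro s
  induction s using Finset.strongInduction with
  | _ s ih =>
    intro hcl
    rcases s.eq_empty_or_nonempty with rfl | ⟨a, ha⟩
    · simp
    · have hfa : f a ∈ s := hcl a ha
      have hane : a ≠ f a := fun h => hf a h.symm
      have hpair : ({a, f a} : Finset α) ⊆ s := by
        intro x hx
        rcases Finset.mem_insert.1 hx with rfl | hx
        · exact ha
        · rw [Finset.mem_singleton] at hx; rw [hx]; exact hfa
      have hss : s \ {a, f a} ⊂ s := Finset.sdiff_ssubset hpair ⟨a, by simp⟩
      have hclosed : ∀ b ∈ s \ {a, f a}, f b ∈ s \ {a, f a} := by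
        intro b hb
        rcases Finset.mem_sdiff.1 hb with ⟨hbs, hbn⟩
        simp only [Finset.mem_insert, Finset.mem_singleton, not_or] at hbn
        refine Finset.mem_sdiff.2 ⟨hcl b hbs, ?_⟩
        simp only [Finset.mem_insert, Finset.mem_singleton, not_or]
        refine ⟨fun h => hbn.2 ?_, fun h => hbn.1 ?_⟩
        · have := congrArg f h; rwa [h2] at this
        · have := congrArg f h; rwa [h2, h2] at this
      obtain ⟨r, hr⟩ := ih _ hss hclosed
      have hcard := Finset.card_sdiff_add_card_eq_card hpair
      rw [Finset.card_pair hane] at hcard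
      exact ⟨r + 1, by omega⟩

private lemma even_natCard_of_free_involution {α : Type*} (f : α → α)
    (h2 : ∀ a, f (f a) = a) (hf : ∀ a, f a ≠ a) : Even (Nat.card α) := by
  rcases finite_or_infinite α with h | h
  · haveI := Fintype.ofFinite α
    rw [Nat.card_eq_fintype_card, ← Finset.card_univ]
    exact aux_even_finset f h2 hf Finset.univ (fun a _ => Finset.mem_univ _)
  · simp

private lemma exists_nonsquare_ne_zero (F : Type*) [Field F] [Fintype F]
    (hodd : Odd (Fintype.card F)) : ∃ lam : F, lam ≠ 0 ∧ ¬ IsSquare lam := by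
  have hchar : ringChar F ≠ 2 := by
    intro h
    obtain ⟨m, hp, hcard⟩ := FiniteField.card F (ringChar F)
    rw [h] at hcard
    have heven : Even ((2 : ℕ) ^ (m : ℕ)) :=
      (Nat.even_pow).2 ⟨even_two, by exact_mod_cast m.pos.ne'⟩
    rw [hcard] at hodd
    exact (Nat.not_even_iff_odd.2 hodd) heven
  obtain ⟨lam, hlam⟩ := FiniteField.exists_nonsquare hchar
  refine ⟨lam, fun h0 => hlam ?_, hlam⟩
  rw [h0]; exact ⟨0, (mul_zero 0).symm⟩

variable {F : Type*} [Field F]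

/-- A nonzero finite-dimensional space over an odd finite field of even dimension has
an even number of one-dimensional subspaces. -/
private lemma even_card_one_dim [Fintype F] (hodd : Odd (Fintype.card F))
    {M : Type*} [AddCommGroup M] [Module F M] [FiniteDimensional F M]
    (hM : Even (finrank F M)) :
    Even (Nat.card {d : Submodule F M // finrank F d = 1}) := by
  obtain ⟨m, hm⟩ := hM
  set V := (Fin m → F) with hV
  have hfr : finrank F (V × V) = finrank F M := by
    rw [finrank_prod, finrank_fin_fun, hm]
  let e : (V × V) ≃ₗ[F] M := LinearEquiv.ofFinrankEq _ _ hfr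
  let E : {d : Submodule F (V × V) // finrank F d = 1} ≃ {d : Submodule F M // finrank F d = 1} :=
    (Submodule.orderIsoMapComap e).toEquiv.subtypeEquiv (fun d => by
      show finrank F d = 1 ↔ finrank F (Submodule.map (e : (V × V) →ₗ[F] M) d) = 1
      rw [LinearEquiv.finrank_map_eq])
  rw [← Nat.card_congr E]
  obtain ⟨lam, hlam0, hlam⟩ := exists_nonsquare_ne_zero F hodd
  let J : (V × V) ≃ₗ[F] (V × V) :=
    (LinearEquiv.prodComm F V V).trans
      ((LinearEquiv.refl F V).prodCongr (LinearEquiv.smulOfNeZero F V lam hlam0))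
  have hJapp : ∀ p : V × V, J p = (p.2, lam • p.1) := fun p => rfl
  have hJmap : ∀ d : Submodule F (V × V),
      finrank F (Submodule.map (J : (V × V) →ₗ[F] (V × V)) d) = finrank F d :=
    fun d => LinearEquiv.finrank_map_eq J d
  set f : {d : Submodule F (V × V) // finrank F d = 1} →
      {d : Submodule F (V × V) // finrank F d = 1} :=
    fun d => ⟨Submodule.map (J : (V × V) →ₗ[F] (V × V)) d.1, by rw [hJmap]; exact d.2⟩ with hfdef
  apply even_natCard_of_free_involution f
  · -- involution
    intro d
    apply Subtype.ext
    show Submodule.map _ (Submodule.map _ d.1) = d.1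
    apply le_antisymm
    · rintro z hz
      obtain ⟨y, hy, rfl⟩ := Submodule.mem_map.1 hz
      obtain ⟨w, hw, rfl⟩ := Submodule.mem_map.1 hy
      have : (J : (V × V) →ₗ[F] (V × V)) ((J : (V × V) →ₗ[F] (V × V)) w) = lam • w := by
        show J (J w) = lam • w
        rw [hJapp, hJapp]
        cases w; rfl
      rw [this]
      exact d.1.smul_mem _ hw
    · intro z hz
      refine Submodule.mem_map.2 ⟨J (lam⁻¹ • z), Submodule.mem_map.2
        ⟨lam⁻¹ • z, d.1.smul_mem _ hz, rfl⟩, ?_⟩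
      show J (J (lam⁻¹ • z)) = z
      rw [hJapp, hJapp]
      obtain ⟨z1, z2⟩ := z
      show (lam • (lam⁻¹ • z1), lam • (lam⁻¹ • z2)) = (z1, z2)
      rw [smul_smul, smul_smul, mul_inv_cancel₀ hlam0, one_smul, one_smul]
  · -- no fixed points
    intro d hd
    have hone : finrank F d.1 = 1 := d.2
    have hbot : d.1 ≠ ⊥ := by
      intro h
      rw [h] at hone
      simp [finrank_bot] at hone
    obtain ⟨v, hv, hv0⟩ := Submodule.exists_mem_ne_zero_of_ne_bot hbot
    have hspan : Submodule.span F {v} = d.1 := by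
      apply Submodule.eq_of_le_of_finrank_le
      · rw [Submodule.span_le, Set.singleton_subset_iff]; exact hv
      · rw [hone, finrank_span_singleton hv0]
    have hJv : J v ∈ d.1 := by
      have : J v ∈ Submodule.map (J : (V × V) →ₗ[F] (V × V)) d.1 :=
        Submodule.mem_map.2 ⟨v, hv, rfl⟩
      have heq : Submodule.map (J : (V × V) →ₗ[F] (V × V)) d.1 = d.1 :=
        congrArg Subtype.val hd
      rwa [heq] at this
    rw [← hspan] at hJv
    obtain ⟨mu, hmu⟩ := Submodule.mem_span_singleton.1 hJv
    obtain ⟨x, y⟩ := v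
    rw [hJapp] at hmu
    have h1 : mu • x = y := congrArg Prod.fst hmu
    have h2 : mu • y = lam • x := congrArg Prod.snd hmu
    by_cases hx : x = 0
    · apply hv0
      rw [hx] at h1 ⊢
      rw [smul_zero] at h1
      rw [← h1]; rfl
    · apply hlam
      have : (mu * mu) • x = lam • x := by
        rw [mul_smul, h1, h2]
      have h3 : (mu * mu - lam) • x = 0 := by
        rw [sub_smul, this, sub_self]
      rcases smul_eq_zero.1 h3 with h | h
      · exact ⟨mu, by linear_combination -h⟩
      · exact absurd h hx

/-- A 1-dim and distinct 1-dim submodules intersect trivially. -/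
private lemma inf_eq_bot_of_one_dim {M : Type*} [AddCommGroup M] [Module F M]
    [FiniteDimensional F M] {a c : Submodule F M}
    (ha : finrank F a = 1) (hc : finrank F c = 1) (hne : a ≠ c) : a ⊓ c = ⊥ := by
  by_contra h
  have hle : a ⊓ c ≤ a := inf_le_left
  have h1 : finrank F (a ⊓ c : Submodule F M) ≤ 1 := ha ▸ Submodule.finrank_mono hle
  have h0 : finrank F (a ⊓ c : Submodule F M) ≠ 0 := fun h0 =>
    h (Submodule.finrank_eq_zero.1 h0)
  have heq : finrank F (a ⊓ c : Submodule F M) = 1 := by omega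
  have hac : a ⊓ c = a := Submodule.eq_of_le_of_finrank_le hle (by rw [ha, heq])
  have hca : a ⊓ c = c := Submodule.eq_of_le_of_finrank_le inf_le_right (by rw [hc, heq])
  exact hne (hac.symm.trans hca)

private lemma finrank_sup_two {M : Type*} [AddCommGroup M] [Module F M]
    [FiniteDimensional F M] {a c : Submodule F M}
    (ha : finrank F a = 1) (hc : finrank F c = 1) (hne : a ≠ c) :
    finrank F (a ⊔ c : Submodule F M) = 2 := by
  have key := Submodule.finrank_sup_add_finrank_inf_eq a c
  rw [inf_eq_bot_of_one_dim ha hc hne, finrank_bot, ha, hc] at key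
  omega

private lemma eq_sup_of_le_of_le {M : Type*} [AddCommGroup M] [Module F M]
    [FiniteDimensional F M] {W a c : Submodule F M}
    (hW : finrank F W = 2) (ha : finrank F a = 1) (hc : finrank F c = 1) (hne : a ≠ c)
    (haW : a ≤ W) (hcW : c ≤ W) : W = a ⊔ c := by
  symm
  apply Submodule.eq_of_le_of_finrank_le (sup_le haW hcW)
  rw [hW, finrank_sup_two ha hc hne]

/-- The number of 2-dimensional subspaces containing a fixed 1-dimensional subspace
of an odd-dimensional space is even. -/
private lemma even_card_lines_through [Fintype F] (hodd : Odd (Fintype.card F))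
    {M : Type*} [AddCommGroup M] [Module F M] [FiniteDimensional F M]
    (hM : Odd (finrank F M)) (a : Submodule F M) (ha : finrank F a = 1) :
    Even (Nat.card {W : Submodule F M // finrank F W = 2 ∧ a ≤ W}) := by
  obtain ⟨C, hC⟩ := Submodule.exists_isCompl a
  have hinf : a ⊓ C = ⊥ := hC.disjoint.eq_bot
  have hsup : a ⊔ C = ⊤ := hC.codisjoint.eq_top
  have hfrC : 1 + finrank F C = finrank F M := by
    rw [← ha]; exact Submodule.finrank_add_eq_of_isCompl hC
  have hCeven : Even (finrank F C) := by
    obtain ⟨k, hk⟩ := hM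
    exact ⟨k, by omega⟩
  -- the key computation: for `a ≤ W`, `W = a ⊔ (W ⊓ C)`
  have hrec : ∀ W : Submodule F M, a ≤ W → a ⊔ (W ⊓ C) = W := by
    intro W haW
    have h := sup_inf_assoc_of_le C haW
    rw [hsup, top_inf_eq] at h
    rw [inf_comm]
    exact h.symm
  have hfr_inf : ∀ W : Submodule F M, finrank F W = 2 → a ≤ W →
      finrank F (W ⊓ C : Submodule F M) = 1 := by
    intro W h2 haW
    have key := Submodule.finrank_sup_add_finrank_inf_eq a (W ⊓ C)
    have hb : a ⊓ (W ⊓ C) = ⊥ := by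
      apply le_bot_iff.1
      rw [← hinf]
      exact inf_le_inf_left a inf_le_right
    rw [hrec W haW, hb, finrank_bot, ha, h2] at key
    omega
  have hfr_sup : ∀ c : Submodule F M, finrank F c = 1 → c ≤ C →
      finrank F (a ⊔ c : Submodule F M) = 2 := by
    intro c h1 hcC
    have key := Submodule.finrank_sup_add_finrank_inf_eq a c
    have hb : a ⊓ c = ⊥ := by
      apply le_bot_iff.1
      rw [← hinf]
      exact inf_le_inf_left a hcC
    rw [hb, finrank_bot, ha, h1] at key
    omega
  let E1 : {W : Submodule F M // finrank F W = 2 ∧ a ≤ W} ≃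
      {c : Submodule F M // finrank F c = 1 ∧ c ≤ C} :=
  { toFun := fun W => ⟨W.1 ⊓ C, hfr_inf W.1 W.2.1 W.2.2, inf_le_right⟩
    invFun := fun c => ⟨a ⊔ c.1, hfr_sup c.1 c.2.1 c.2.2, le_sup_left⟩
    left_inv := fun W => Subtype.ext (hrec W.1 W.2.2)
    right_inv := fun c => Subtype.ext (by
      have h := sup_inf_assoc_of_le a c.2.2
      rw [show c.1 ⊔ a = a ⊔ c.1 from sup_comm _ _, hinf, sup_bot_eq] at h
      exact h) }
  let E2 : {c : Submodule F M // finrank F c = 1 ∧ c ≤ C} ≃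
      {d : Submodule F C // finrank F d = 1} :=
  { toFun := fun c => ⟨Submodule.comap C.subtype c.1, by
      have h := Submodule.finrank_map_subtype_eq C (Submodule.comap C.subtype c.1)
      rw [Submodule.map_comap_subtype, inf_eq_right.2 c.2.2] at h
      rw [← h]; exact c.2.1⟩
    invFun := fun d => ⟨Submodule.map C.subtype d.1,
      ⟨by rw [Submodule.finrank_map_subtype_eq]; exact d.2, Submodule.map_subtype_le C d.1⟩⟩
    left_inv := fun c => Subtype.ext (by
      show Submodule.map C.subtype (Submodule.comap C.subtype c.1) = c.1
      rw [Submodule.map_comap_subtype, inf_eq_right.2 c.2.2])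
    right_inv := fun d => Subtype.ext
      (Submodule.comap_map_eq_of_injective (Submodule.injective_subtype C) d.1) }
  rw [Nat.card_congr (E1.trans E2)]
  exact even_card_one_dim hodd hCeven

end Helpers

section Main

variable {F : Type*} [Field F]

private lemma projLine_injective {n : ℕ} {W1 W2 : Submodule F (Fin (n + 1) → F)}
    (h : projLine W1 = projLine W2) : W1 = W2 := by
  have key : ∀ U1 U2 : Submodule F (Fin (n + 1) → F), projLine U1 = projLine U2 → U1 ≤ U2 := by
    intro U1 U2 h v hv
    by_cases hv0 : v = 0
    · rw [hv0]; exact U2.zero_mem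
    · have hp : Projectivization.mk F v hv0 ∈ projLine U1 := by
        show (Projectivization.mk F v hv0).submodule ≤ U1
        rw [Projectivization.submodule_mk]
        rw [Submodule.span_le, Set.singleton_subset_iff]
        exact hv
      rw [h] at hp
      have h2 : Submodule.span F {v} ≤ U2 := by
        have h3 : (Projectivization.mk F v hv0).submodule ≤ U2 := hp
        rwa [Projectivization.submodule_mk] at h3
      exact h2 (Submodule.mem_span_singleton_self v)
  exact le_antisymm (key _ _ h) (key _ _ h.symm)

private lemma main_construction [Fintype F] (hodd : Odd (Fintype.card F)) (n : ℕ)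
    (hn : 2 ≤ n) (hne : Even n) :
    ∀ A B : ℙ F (Fin (n + 1) → F), A ≠ B →
      ∃ S : Finset (Set (ℙ F (Fin (n + 1) → F))),
        (∀ ℓ ∈ S, ∃ W : Submodule F (Fin (n + 1) → F),
          Module.finrank F W = 2 ∧ ℓ = projLine W) ∧
        ∀ x : ℙ F (Fin (n + 1) → F),
          (∑ ℓ ∈ S, if x ∈ ℓ then (1 : ZMod 2) else 0) =
            if x = A ∨ x = B then 1 else 0 := by
  intro A B hAB
  haveI : Finite (Submodule F (Fin (n + 1) → F)) :=
    Finite.of_injective (fun W : Submodule F (Fin (n + 1) → F) => (W : Set (Fin (n + 1) → F)))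
      SetLike.coe_injective
  haveI : Fintype (Submodule F (Fin (n + 1) → F)) := Fintype.ofFinite _
  have hfrM : finrank F (Fin (n + 1) → F) = n + 1 := Module.finrank_fin_fun F
  have hoddM : Odd (finrank F (Fin (n + 1) → F)) := by
    rw [hfrM]; obtain ⟨k, hk⟩ := hne; exact ⟨k, by omega⟩
  have ha : finrank F A.submodule = 1 := A.finrank_submodule
  have hb : finrank F B.submodule = 1 := B.finrank_submodule
  have hab : A.submodule ≠ B.submodule := fun h => hAB (Projectivization.submodule_injective h)
  have hD : finrank F (A.submodule ⊔ B.submodule : Submodule F (Fin (n + 1) → F)) = 2 :=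
    finrank_sup_two ha hb hab
  -- evenness of line-pencils
  have heven : ∀ u : Submodule F (Fin (n + 1) → F), finrank F u = 1 →
      Even ((Finset.univ.filter
        fun W : Submodule F (Fin (n + 1) → F) => finrank F W = 2 ∧ u ≤ W).card) := by
    intro u hu
    have h := even_card_lines_through hodd hoddM u hu
    rwa [Nat.card_eq_fintype_card, Fintype.card_subtype] at h
  -- the count at an endpoint is odd
  have hendpoint : ∀ u v : Submodule F (Fin (n + 1) → F),
      finrank F u = 1 → finrank F v = 1 → u ≠ v →
      (((Finset.univ.filter fun W : Submodule F (Fin (n + 1) → F) =>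
        (finrank F W = 2 ∧ (u ≤ W ∨ v ≤ W) ∧ W ≠ u ⊔ v) ∧ u ≤ W).card : ZMod 2)) = 1 := by
    intro u v hu hv huv
    have hfilter_eq : (Finset.univ.filter fun W : Submodule F (Fin (n + 1) → F) =>
        (finrank F W = 2 ∧ (u ≤ W ∨ v ≤ W) ∧ W ≠ u ⊔ v) ∧ u ≤ W)
        = ((Finset.univ.filter
            fun W : Submodule F (Fin (n + 1) → F) => finrank F W = 2 ∧ u ≤ W).filter
          fun W => W ≠ u ⊔ v) := by
      rw [Finset.filter_filter]
      apply Finset.filter_congr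
      intro W _
      constructor
      · rintro ⟨⟨h2, _, hDne⟩, huW⟩; exact ⟨⟨h2, huW⟩, hDne⟩
      · rintro ⟨⟨h2, huW⟩, hDne⟩; exact ⟨⟨h2, Or.inl huW, hDne⟩, huW⟩
    rw [hfilter_eq]
    have hmemD : u ⊔ v ∈ (Finset.univ.filter
        fun W : Submodule F (Fin (n + 1) → F) => finrank F W = 2 ∧ u ≤ W) :=
      Finset.mem_filter.2 ⟨Finset.mem_univ _, finrank_sup_two hu hv huv, le_sup_left⟩
    have herase : ((Finset.univ.filter
        fun W : Submodule F (Fin (n + 1) → F) => finrank F W = 2 ∧ u ≤ W).filter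
        fun W => W ≠ u ⊔ v)
        = (Finset.univ.filter
        fun W : Submodule F (Fin (n + 1) → F) => finrank F W = 2 ∧ u ≤ W).erase (u ⊔ v) := by
      ext W
      simp only [Finset.mem_filter, Finset.mem_erase]
      tauto
    rw [herase]
    rw [Finset.card_erase_of_mem hmemD]
    obtain ⟨r, hr⟩ := heven u hu
    have hpos : 1 ≤ (Finset.univ.filter
        fun W : Submodule F (Fin (n + 1) → F) => finrank F W = 2 ∧ u ≤ W).card :=
      Finset.card_pos.2 ⟨u ⊔ v, hmemD⟩
    have hmod : ((Finset.univ.filter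
        fun W : Submodule F (Fin (n + 1) → F) => finrank F W = 2 ∧ u ≤ W).card - 1) % 2 = 1 := by
      omega
    rw [← ZMod.natCast_mod _ 2, hmod]
    rfl
  refine ⟨(Finset.univ.filter fun W : Submodule F (Fin (n + 1) → F) =>
      finrank F W = 2 ∧ (A.submodule ≤ W ∨ B.submodule ≤ W) ∧
        W ≠ A.submodule ⊔ B.submodule).image projLine, ?_, ?_⟩
  · intro ℓ hℓ
    obtain ⟨W, hW, rfl⟩ := Finset.mem_image.1 hℓ
    exact ⟨W, ((Finset.mem_filter.1 hW).2).1, rfl⟩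
  · intro x
    rw [Finset.sum_image (fun W1 _ W2 _ h => projLine_injective h)]
    rw [Finset.sum_boole, Finset.filter_filter]
    show ((Finset.univ.filter fun W : Submodule F (Fin (n + 1) → F) =>
      (finrank F W = 2 ∧ (A.submodule ≤ W ∨ B.submodule ≤ W) ∧
        W ≠ A.submodule ⊔ B.submodule) ∧ x.submodule ≤ W).card : ZMod 2)
      = if x = A ∨ x = B then 1 else 0
    by_cases hxA : x = A
    · subst hxA
      rw [if_pos (Or.inl rfl)]
      exact hendpoint x.submodule B.submodule ha hb hab
    · by_cases hxB : x = B
      · subst hxB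
        rw [if_pos (Or.inr rfl)]
        have hswap : (Finset.univ.filter fun W : Submodule F (Fin (n + 1) → F) =>
            (finrank F W = 2 ∧ (A.submodule ≤ W ∨ x.submodule ≤ W) ∧
              W ≠ A.submodule ⊔ x.submodule) ∧ x.submodule ≤ W)
            = (Finset.univ.filter fun W : Submodule F (Fin (n + 1) → F) =>
            (finrank F W = 2 ∧ (x.submodule ≤ W ∨ A.submodule ≤ W) ∧
              W ≠ x.submodule ⊔ A.submodule) ∧ x.submodule ≤ W) := by
          apply Finset.filter_congr
          intro W _
          rw [sup_comm]
          tauto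
        rw [hswap]
        exact hendpoint x.submodule A.submodule hb ha (Ne.symm hab)
      · rw [if_neg (by tauto)]
        have hc : finrank F x.submodule = 1 := x.finrank_submodule
        have hca : x.submodule ≠ A.submodule :=
          fun h => hxA (Projectivization.submodule_injective h)
        have hcb : x.submodule ≠ B.submodule :=
          fun h => hxB (Projectivization.submodule_injective h)
        by_cases hcD : x.submodule ≤ A.submodule ⊔ B.submodule
        · have hempty : (Finset.univ.filter fun W : Submodule F (Fin (n + 1) → F) =>
              (finrank F W = 2 ∧ (A.submodule ≤ W ∨ B.submodule ≤ W) ∧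
                W ≠ A.submodule ⊔ B.submodule) ∧ x.submodule ≤ W) = ∅ := by
            rw [Finset.filter_eq_empty_iff]
            rintro W - ⟨⟨h2, hor, hDne⟩, hcW⟩
            apply hDne
            rcases hor with haW | hbW
            · have hWeq : W = A.submodule ⊔ x.submodule :=
                eq_sup_of_le_of_le h2 ha hc (Ne.symm hca) haW hcW
              have hsub : A.submodule ⊔ x.submodule ≤ A.submodule ⊔ B.submodule :=
                sup_le le_sup_left hcD
              have : A.submodule ⊔ x.submodule = A.submodule ⊔ B.submodule :=
                Submodule.eq_of_le_of_finrank_le hsub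
                  (by rw [hD, finrank_sup_two ha hc (Ne.symm hca)])
              rw [hWeq, this]
            · have hWeq : W = B.submodule ⊔ x.submodule :=
                eq_sup_of_le_of_le h2 hb hc (Ne.symm hcb) hbW hcW
              have hsub : B.submodule ⊔ x.submodule ≤ A.submodule ⊔ B.submodule :=
                sup_le le_sup_right hcD
              have : B.submodule ⊔ x.submodule = A.submodule ⊔ B.submodule :=
                Submodule.eq_of_le_of_finrank_le hsub
                  (by rw [hD, finrank_sup_two hb hc (Ne.symm hcb)])
              rw [hWeq, this]
          rw [hempty, Finset.card_empty, Nat.cast_zero]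
        · have hac : A.submodule ≠ x.submodule := Ne.symm hca
          have hbc : B.submodule ≠ x.submodule := Ne.symm hcb
          have hsupne : A.submodule ⊔ x.submodule ≠ B.submodule ⊔ x.submodule := by
            intro h
            apply hcD
            have h1 : A.submodule ⊔ B.submodule ≤ A.submodule ⊔ x.submodule := by
              apply sup_le le_sup_left
              rw [h]; exact le_sup_left
            have h2 : A.submodule ⊔ B.submodule = A.submodule ⊔ x.submodule :=
              Submodule.eq_of_le_of_finrank_le h1
                (by rw [hD, finrank_sup_two ha hc hac])
            rw [h2]
            exact le_sup_right
          have hfeq : (Finset.univ.filter fun W : Submodule F (Fin (n + 1) → F) =>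
              (finrank F W = 2 ∧ (A.submodule ≤ W ∨ B.submodule ≤ W) ∧
                W ≠ A.submodule ⊔ B.submodule) ∧ x.submodule ≤ W)
              = {A.submodule ⊔ x.submodule, B.submodule ⊔ x.submodule} := by
            ext W
            simp only [Finset.mem_filter, Finset.mem_univ, true_and, Finset.mem_insert,
              Finset.mem_singleton]
            constructor
            · rintro ⟨⟨h2, hor, hDne⟩, hcW⟩
              rcases hor with haW | hbW
              · exact Or.inl (eq_sup_of_le_of_le h2 ha hc hac haW hcW)
              · exact Or.inr (eq_sup_of_le_of_le h2 hb hc hbc hbW hcW)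
            · rintro (rfl | rfl)
              · refine ⟨⟨finrank_sup_two ha hc hac, Or.inl le_sup_left, ?_⟩, le_sup_right⟩
                intro h
                apply hcD
                rw [← h]; exact le_sup_right
              · refine ⟨⟨finrank_sup_two hb hc hbc, Or.inr le_sup_left, ?_⟩, le_sup_right⟩
                intro h
                apply hcD
                rw [← h]; exact le_sup_right
          rw [hfeq, Finset.card_pair hsupne]
          exact ZMod.natCast_self 2

end Main

theorem stmt_14 {F : Type*} [Field F] [Fintype F]
    (hodd : Odd (Fintype.card F)) (n : ℕ) (hn : 2 ≤ n) (hne : Even n) :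
    (∀ A B : ℙ F (Fin (n + 1) → F), A ≠ B →
      ∃ S : Finset (Set (ℙ F (Fin (n + 1) → F))),
        (∀ ℓ ∈ S, ∃ W : Submodule F (Fin (n + 1) → F),
          Module.finrank F W = 2 ∧ ℓ = projLine W) ∧
        ∀ x : ℙ F (Fin (n + 1) → F),
          (∑ ℓ ∈ S, if x ∈ ℓ then (1 : ZMod 2) else 0) =
            if x = A ∨ x = B then 1 else 0) ∧
    (∀ c : ℙ F (Fin (n + 1) → F) → ZMod 2,
      2 ≤ Nat.card {x : ℙ F (Fin (n + 1) → F) | c x = 1} →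
      ∃ S : Finset (Set (ℙ F (Fin (n + 1) → F))),
        (∀ ℓ ∈ S, ∃ W : Submodule F (Fin (n + 1) → F),
          Module.finrank F W = 2 ∧ ℓ = projLine W) ∧
        Nat.card {x : ℙ F (Fin (n + 1) → F) |
            c x + ((S.filter fun ℓ => x ∈ ℓ).card : ZMod 2) = 1} <
          Nat.card {x : ℙ F (Fin (n + 1) → F) | c x = 1}) ∧
    (∀ c : ℙ F (Fin (n + 1) → F) → ZMod 2,
      Even (Nat.card {x : ℙ F (Fin (n + 1) → F) | c x = 1}) →
      ∃ S : Finset (Set (ℙ F (Fin (n + 1) → F))),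
        (∀ ℓ ∈ S, ∃ W : Submodule F (Fin (n + 1) → F),
          Module.finrank F W = 2 ∧ ℓ = projLine W) ∧
        ∀ x : ℙ F (Fin (n + 1) → F),
          c x + ((S.filter fun ℓ => x ∈ ℓ).card : ZMod 2) = 0) := by
  haveI : Finite (ℙ F (Fin (n + 1) → F)) := Quotient.finite _
  have hpart1 := main_construction (F := F) hodd n hn hne
  have hflip : ∀ A B : ℙ F (Fin (n + 1) → F), A ≠ B →
      ∃ S : Finset (Set (ℙ F (Fin (n + 1) → F))),
        (∀ ℓ ∈ S, ∃ W : Submodule F (Fin (n + 1) → F),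
          Module.finrank F W = 2 ∧ ℓ = projLine W) ∧
        ∀ x, ((S.filter fun ℓ => x ∈ ℓ).card : ZMod 2) = if x = A ∨ x = B then 1 else 0 := by
    intro A B hAB
    obtain ⟨S, hS1, hS2⟩ := hpart1 A B hAB
    refine ⟨S, hS1, fun x => ?_⟩
    rw [← Finset.sum_boole]
    exact hS2 x
  have hremove : ∀ (c : ℙ F (Fin (n + 1) → F) → ZMod 2) (A B : ℙ F (Fin (n + 1) → F)),
      A ≠ B → c A = 1 → c B = 1 →
      ∃ S : Finset (Set (ℙ F (Fin (n + 1) → F))),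
        (∀ ℓ ∈ S, ∃ W : Submodule F (Fin (n + 1) → F),
          Module.finrank F W = 2 ∧ ℓ = projLine W) ∧
        {x : ℙ F (Fin (n + 1) → F) | c x + ((S.filter fun ℓ => x ∈ ℓ).card : ZMod 2) = 1}
          = {x : ℙ F (Fin (n + 1) → F) | c x = 1} \ {A, B} := by
    intro c A B hAB hcA hcB
    obtain ⟨S, hS1, hS2⟩ := hflip A B hAB
    refine ⟨S, hS1, ?_⟩
    ext x
    simp only [Set.mem_setOf_eq, Set.mem_diff, Set.mem_insert_iff, Set.mem_singleton_iff]
    rw [hS2 x]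
    by_cases hx : x = A ∨ x = B
    · rw [if_pos hx]
      constructor
      · intro h
        exfalso
        rcases hx with rfl | rfl
        · rw [hcA] at h; exact (by decide : ¬((1 : ZMod 2) + 1 = 1)) h
        · rw [hcB] at h; exact (by decide : ¬((1 : ZMod 2) + 1 = 1)) h
      · rintro ⟨-, hne'⟩; exact absurd hx hne'
    · rw [if_neg hx, add_zero]
      tauto
  have hpart2 : ∀ c : ℙ F (Fin (n + 1) → F) → ZMod 2,
      2 ≤ Nat.card {x : ℙ F (Fin (n + 1) → F) | c x = 1} →
      ∃ S : Finset (Set (ℙ F (Fin (n + 1) → F))),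
        (∀ ℓ ∈ S, ∃ W : Submodule F (Fin (n + 1) → F),
          Module.finrank F W = 2 ∧ ℓ = projLine W) ∧
        Nat.card {x : ℙ F (Fin (n + 1) → F) |
            c x + ((S.filter fun ℓ => x ∈ ℓ).card : ZMod 2) = 1} <
          Nat.card {x : ℙ F (Fin (n + 1) → F) | c x = 1} := by
    intro c hc
    have hfin : ({x : ℙ F (Fin (n + 1) → F) | c x = 1} : Set _).Finite := Set.toFinite _
    rw [Nat.card_coe_set_eq] at hc
    obtain ⟨A, B, hA, hB, hAB⟩ := (Set.one_lt_ncard_iff hfin).1 (by omega)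
    obtain ⟨S, hS1, hS2⟩ := hremove c A B hAB hA hB
    refine ⟨S, hS1, ?_⟩
    rw [Nat.card_coe_set_eq, Nat.card_coe_set_eq, hS2]
    refine Set.ncard_lt_ncard ?_ hfin
    rw [Set.ssubset_iff_subset_ne]
    refine ⟨Set.diff_subset, ?_⟩
    intro heq
    have : A ∈ {x : ℙ F (Fin (n + 1) → F) | c x = 1} \ {A, B} := by
      rw [heq]; exact hA
    simp at this
  have hpart3 : ∀ (k : ℕ) (c : ℙ F (Fin (n + 1) → F) → ZMod 2),
      Nat.card {x : ℙ F (Fin (n + 1) → F) | c x = 1} = k → Even k →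
      ∃ S : Finset (Set (ℙ F (Fin (n + 1) → F))),
        (∀ ℓ ∈ S, ∃ W : Submodule F (Fin (n + 1) → F),
          Module.finrank F W = 2 ∧ ℓ = projLine W) ∧
        ∀ x : ℙ F (Fin (n + 1) → F),
          c x + ((S.filter fun ℓ => x ∈ ℓ).card : ZMod 2) = 0 := by
    intro k
    induction k using Nat.strong_induction_on with
    | _ k ih =>
      intro c hck hke
      rcases Nat.eq_zero_or_pos k with rfl | hkpos
      · refine ⟨∅, by simp, fun x => ?_⟩
        have hempty : {x : ℙ F (Fin (n + 1) → F) | c x = 1} = ∅ := by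
          rw [Nat.card_coe_set_eq] at hck
          exact (Set.ncard_eq_zero (Set.toFinite _)).1 hck
        have hcx : c x ≠ 1 := fun h => by
          rw [Set.eq_empty_iff_forall_notMem] at hempty
          exact hempty x h
        have hc0 : c x = 0 := by
          rcases (by decide : ∀ z : ZMod 2, z = 0 ∨ z = 1) (c x) with h | h
          · exact h
          · exact absurd h hcx
        simp [hc0]
      · have hk2 : 2 ≤ k := by
          rcases hke with ⟨r, hr⟩; omega
        have hfin : ({x : ℙ F (Fin (n + 1) → F) | c x = 1} : Set _).Finite := Set.toFinite _
        have h2' : 1 < ({x : ℙ F (Fin (n + 1) → F) | c x = 1} : Set _).ncard := by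
          rw [← Nat.card_coe_set_eq, hck]; omega
        obtain ⟨A, B, hA, hB, hAB⟩ := (Set.one_lt_ncard_iff hfin).1 h2'
        obtain ⟨S1, hS11, hS12⟩ := hremove c A B hAB hA hB
        have hsubAB : ({A, B} : Set (ℙ F (Fin (n + 1) → F))) ⊆
            {x : ℙ F (Fin (n + 1) → F) | c x = 1} :=
          Set.insert_subset hA (Set.singleton_subset_iff.2 hB)
        have hc'card : Nat.card {x : ℙ F (Fin (n + 1) → F) |
            c x + ((S1.filter fun ℓ => x ∈ ℓ).card : ZMod 2) = 1} = k - 2 := by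
          rw [Nat.card_coe_set_eq, hS12, Set.ncard_diff hsubAB (Set.toFinite _), Set.ncard_pair hAB,
            ← Nat.card_coe_set_eq, hck]
        obtain ⟨S2, hS21, hS22⟩ := ih (k - 2) (by omega) _ hc'card
          (by rcases hke with ⟨r, hr⟩; exact ⟨r - 1, by omega⟩)
        refine ⟨symmDiff S1 S2, ?_, ?_⟩
        · intro ℓ hℓ
          rcases Finset.mem_symmDiff.1 hℓ with ⟨h, -⟩ | ⟨h, -⟩
          · exact hS11 ℓ h
          · exact hS21 ℓ h
        · intro x
          have hfd : (symmDiff S1 S2).filter (fun ℓ => x ∈ ℓ) =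
              symmDiff (S1.filter fun ℓ => x ∈ ℓ) (S2.filter fun ℓ => x ∈ ℓ) := by
            ext ℓ
            simp only [Finset.mem_filter, Finset.mem_symmDiff]
            tauto
          have hcard : ∀ u v : Finset (Set (ℙ F (Fin (n + 1) → F))),
              (symmDiff u v).card + 2 * (u ∩ v).card = u.card + v.card := by
            intro u v
            have hdis : Disjoint (symmDiff u v) (u ∩ v) := disjoint_symmDiff_inf u v
            have hun : symmDiff u v ⊔ (u ⊓ v) = u ⊔ v := symmDiff_sup_inf u v
            have h1 : (symmDiff u v).card + (u ∩ v).card = (u ∪ v).card := by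
              rw [← Finset.card_union_of_disjoint hdis]
              exact congrArg Finset.card hun
            have h2 := Finset.card_inter_add_card_union u v
            omega
          have hthis := hcard (S1.filter fun ℓ => x ∈ ℓ) (S2.filter fun ℓ => x ∈ ℓ)
          have hcast := congrArg (fun t : ℕ => (t : ZMod 2)) hthis
          push_cast at hcast
          have h20 : (2 : ZMod 2) = 0 := by decide
          rw [h20, zero_mul, add_zero] at hcast
          rw [hfd, hcast, ← add_assoc]
          exact hS22 x
  exact ⟨hpart1, hpart2, fun c hc => hpart3 _ c rfl hc⟩
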